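/- For f in the span of the Haar system with ‖f‖_{SL^∞} < ∞ and g in the span of the Haar system, the duality estimate |∫₀¹ f(x)g(x) dx| ≤ ‖f‖_{SL^∞} ‖g‖_{H^1} holds. -/

import Mathlib

open MeasureTheory Set

/-- The dyadic interval `[(k-1)/2^n, k/2^n)`, encoded by the pair `K = (n, k)`. -/
def dyadicSet (K : ℕ × ℕ) : Set ℝ := Set.Ico ((K.2 - 1 : ℝ) / 2 ^ K.1) ((K.2 : ℝ) / 2 ^ K.1)

/-- `(n, k)` encodes a genuine dyadic interval of `[0,1)` iff `1 ≤ k ≤ 2^n`. -/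
def IsDyadic (K : ℕ × ℕ) : Prop := 1 ≤ K.2 ∧ K.2 ≤ 2 ^ K.1

/-- The `L^∞`-normalized Haar function `h_I = χ_{I^+} - χ_{I^-}` of the dyadic interval
encoded by `K = (n, k)`. -/
noncomputable def haar (K : ℕ × ℕ) : ℝ → ℝ := fun x =>
  (Set.Ico ((2 * K.2 - 2 : ℝ) / 2 ^ (K.1 + 1)) ((2 * K.2 - 1 : ℝ) / 2 ^ (K.1 + 1))).indicator 1 x
  - (Set.Ico ((2 * K.2 - 1 : ℝ) / 2 ^ (K.1 + 1)) ((2 * K.2 : ℝ) / 2 ^ (K.1 + 1))).indicator 1 x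

lemma haar_measurable (K : ℕ × ℕ) : Measurable (haar K) :=
  (measurable_one.indicator measurableSet_Ico).sub (measurable_one.indicator measurableSet_Ico)

lemma abs_haar_le (K : ℕ × ℕ) (x : ℝ) : |haar K x| ≤ 1 := by
  unfold haar
  rw [abs_sub_le_iff]
  constructor <;>
  · simp only [Set.indicator_apply]
    split_ifs <;> norm_num

lemma haar_support (n k : ℕ) (x : ℝ) (hx : x ∉ dyadicSet (n, k)) : haar (n, k) x = 0 := by
  simp only [dyadicSet, Set.mem_Ico, not_and_or, not_le, not_lt] at hx
  have hpos : (0:ℝ) < 2 ^ n := by positivity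
  have hpos2 : (0:ℝ) < 2 ^ (n+1) := by positivity
  have hpow : (2:ℝ) ^ (n+1) = 2 ^ n * 2 := by rw [pow_succ]
  unfold haar
  dsimp only
  rw [Set.indicator_of_notMem, Set.indicator_of_notMem, sub_zero]
  · rw [Set.mem_Ico, not_and_or, not_le, not_lt]
    rcases hx with h | h
    · left
      rw [lt_div_iff₀ hpos2, hpow]
      rw [lt_div_iff₀ hpos] at h
      nlinarith
    · right
      rw [div_le_iff₀ hpos2, hpow]
      rw [div_le_iff₀ hpos] at h
      nlinarith
  · rw [Set.mem_Ico, not_and_or, not_le, not_lt]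
    rcases hx with h | h
    · left
      rw [lt_div_iff₀ hpos2, hpow]
      rw [lt_div_iff₀ hpos] at h
      nlinarith
    · right
      rw [div_le_iff₀ hpos2, hpow]
      rw [div_le_iff₀ hpos] at h
      nlinarith

lemma haar_eq (n k : ℕ) (hk : 1 ≤ k) :
    haar (n, k) = fun x => (dyadicSet (n+1, 2*k-1)).indicator (1:ℝ→ℝ) x
      - (dyadicSet (n+1, 2*k)).indicator (1:ℝ→ℝ) x := by
  funext x
  have h1 : ((2*k-1 : ℕ) : ℝ) = 2 * (k:ℝ) - 1 := by
    have h : 1 ≤ 2*k := by omega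
    push_cast [h]
    ring
  have h2 : ((2*k : ℕ) : ℝ) = 2 * (k:ℝ) := by push_cast; ring
  unfold haar dyadicSet
  dsimp only
  rw [h1, h2, show (2*(k:ℝ) - 1 - 1) = 2*(k:ℝ) - 2 by ring]

lemma dyadic_disjoint (n k l : ℕ) (h : k ≠ l) (x : ℝ)
    (hx : x ∈ dyadicSet (n, k)) : x ∉ dyadicSet (n, l) := by
  intro hy
  simp only [dyadicSet, Set.mem_Ico] at hx hy
  have hpos : (0:ℝ) < 2 ^ n := by positivity
  rcases h.lt_or_gt with hkl | hkl
  · have hc : (k:ℝ) ≤ (l:ℝ) - 1 := by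
      have : (k:ℝ) + 1 ≤ l := by exact_mod_cast hkl
      linarith
    have : (k:ℝ)/2^n ≤ ((l:ℝ)-1)/2^n := by gcongr
    linarith [hx.2, hy.1]
  · have hc : (l:ℝ) ≤ (k:ℝ) - 1 := by
      have : (l:ℝ) + 1 ≤ k := by exact_mod_cast hkl
      linarith
    have : (l:ℝ)/2^n ≤ ((k:ℝ)-1)/2^n := by gcongr
    linarith [hy.2, hx.1]

lemma dyadic_subset (n m k : ℕ) (h : n ≤ m) (hk : 1 ≤ k) :
    dyadicSet (m, k) ⊆ dyadicSet (n, (k-1)/2^(m-n) + 1) := by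
  intro x hx
  simp only [dyadicSet, Set.mem_Ico] at hx ⊢
  set d := 2^(m-n) with hd
  have hdpos : 0 < d := by positivity
  have h2 : k - 1 < ((k-1)/d + 1) * d := by
    conv_lhs => rw [← Nat.div_add_mod (k-1) d]
    have hlt := Nat.mod_lt (k-1) hdpos
    calc d * ((k-1)/d) + (k-1) % d < d * ((k-1)/d) + d := by omega
      _ = ((k-1)/d + 1) * d := by ring
  set j := (k-1)/d with hj
  have h1 : j * d ≤ k - 1 := Nat.div_mul_le_self _ _
  have hpows : (2:ℝ)^m = 2^n * (d:ℝ) := by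
    rw [hd]
    push_cast
    rw [← pow_add, Nat.add_sub_cancel' h]
  have hposn : (0:ℝ) < 2 ^ n := by positivity
  have hposm : (0:ℝ) < 2 ^ m := by positivity
  have hck : (k:ℝ) - 1 = ((k-1:ℕ):ℝ) := by push_cast [hk]; ring
  have h1R : (j:ℝ) * d ≤ (k:ℝ) - 1 := by rw [hck]; exact_mod_cast h1
  have h2R : (k:ℝ) ≤ ((j:ℝ) + 1) * d := by
    have h2' : k ≤ (j + 1) * d := by omega
    exact_mod_cast h2'
  constructor
  · have key : (j:ℝ)/2^n ≤ ((k:ℝ)-1) / 2^m := by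
      rw [div_le_div_iff₀ hposn hposm, hpows]
      nlinarith [mul_le_mul_of_nonneg_right h1R hposn.le]
    push_cast
    rw [show ((j:ℝ) + 1 - 1) = (j:ℝ) by ring]
    linarith [hx.1]
  · have key : (k:ℝ) / 2^m ≤ ((j:ℝ) + 1) / 2^n := by
      rw [div_le_div_iff₀ hposm hposn, hpows]
      nlinarith [mul_le_mul_of_nonneg_right h2R hposn.le]
    push_cast
    linarith [hx.2]

lemma intInt {f : ℝ → ℝ} (hm : Measurable f) {C : ℝ} (hC : ∀ x, |f x| ≤ C) :
    IntervalIntegrable f volume 0 1 := by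
  rw [intervalIntegrable_iff_integrableOn_Ioc_of_le zero_le_one]
  have hc : IntegrableOn (fun _ => C) (Set.Ioc (0:ℝ) 1) volume :=
    integrableOn_const measure_Ioc_lt_top.ne
  exact hc.mono' hm.aestronglyMeasurable.restrict (ae_of_all _ fun x => by
    simpa [Real.norm_eq_abs] using hC x)

lemma intInt_indicator (s : Set ℝ) (hs : MeasurableSet s) :
    IntervalIntegrable (s.indicator (1:ℝ→ℝ)) volume 0 1 :=
  intInt (measurable_one.indicator hs) (C := 1) (fun x => by
    classical
    rw [Set.indicator_apply]; split_ifs <;> norm_num)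

lemma intInt_haar (K : ℕ × ℕ) : IntervalIntegrable (haar K) volume 0 1 :=
  intInt (haar_measurable K) (abs_haar_le K)

lemma integral_indicator_Ico (p q : ℝ) (h0 : 0 ≤ p) (hpq : p ≤ q) (hq : q ≤ 1) :
    ∫ x in (0:ℝ)..1, (Set.Ico p q).indicator (1:ℝ→ℝ) x = q - p := by
  rw [intervalIntegral.integral_of_le zero_le_one,
    setIntegral_indicator measurableSet_Ico]
  simp only [Pi.one_apply]
  rw [setIntegral_const]
  have hvol : volume (Set.Ioc (0:ℝ) 1 ∩ Set.Ico p q) = ENNReal.ofReal (q - p) := by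
    rcases eq_or_lt_of_le h0 with h | h
    · have hset : Set.Ioc (0:ℝ) 1 ∩ Set.Ico p q = Set.Ioo 0 q := by
        ext y
        simp only [Set.mem_inter_iff, Set.mem_Ioc, Set.mem_Ico, Set.mem_Ioo, ← h]
        constructor
        · rintro ⟨⟨h1, _⟩, _, h4⟩; exact ⟨h1, h4⟩
        · rintro ⟨h1, h2⟩; exact ⟨⟨h1, le_trans h2.le hq⟩, h1.le, h2⟩
      rw [hset, Real.volume_Ioo, ← h]
    · have hset : Set.Ioc (0:ℝ) 1 ∩ Set.Ico p q = Set.Ico p q := by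
        apply Set.inter_eq_self_of_subset_right
        rintro y ⟨h1, h2⟩
        exact ⟨lt_of_lt_of_le h h1, le_trans h2.le hq⟩
      rw [hset, Real.volume_Ico]
  rw [measureReal_def, hvol, ENNReal.toReal_ofReal (by linarith), smul_eq_mul, mul_one]

lemma integral_haar (n k : ℕ) (hk : 1 ≤ k) (hk2 : k ≤ 2^n) :
    ∫ x in (0:ℝ)..1, haar (n, k) x = 0 := by
  have hpos2 : (0:ℝ) < 2 ^ (n+1) := by positivity
  have hkR : (1:ℝ) ≤ (k:ℝ) := by exact_mod_cast hk
  have hk2R : (k:ℝ) ≤ 2^n := by exact_mod_cast hk2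
  have h2n : (2:ℝ) ^ (n+1) = 2 * 2^n := by rw [pow_succ]; ring
  unfold haar
  dsimp only
  rw [intervalIntegral.integral_sub (intInt_indicator _ measurableSet_Ico)
    (intInt_indicator _ measurableSet_Ico)]
  rw [integral_indicator_Ico _ _ (div_nonneg (by linarith) hpos2.le)
      (by gcongr <;> linarith) (by rw [div_le_one hpos2]; linarith),
    integral_indicator_Ico _ _ (div_nonneg (by linarith) hpos2.le)
      (by gcongr <;> linarith) (by rw [div_le_one hpos2]; linarith)]
  ring

lemma haar_orth (n k m l : ℕ) (hK : IsDyadic (n,k)) (hL : IsDyadic (m,l)) (hnm : n ≤ m)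
    (hne : (n,k) ≠ (m,l)) :
    ∫ x in (0:ℝ)..1, haar (n,k) x * haar (m,l) x = 0 := by
  classical
  rcases eq_or_lt_of_le hnm with heq | hlt
  · subst heq
    have hkl : k ≠ l := fun h => hne (by rw [h])
    have hz : ∀ x, haar (n,k) x * haar (n,l) x = 0 := by
      intro x
      by_cases hx : x ∈ dyadicSet (n,k)
      · rw [haar_support n l x (dyadic_disjoint n k l hkl x hx), mul_zero]
      · rw [haar_support n k x hx, zero_mul]
    simp only [hz, intervalIntegral.integral_zero]
  · have hm1 : n + 1 ≤ m := hlt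
    set p := (l-1)/2^(m-(n+1)) + 1 with hp
    have hsub : dyadicSet (m,l) ⊆ dyadicSet (n+1,p) := dyadic_subset (n+1) m l hm1 hL.1
    have hk1 : 1 ≤ k := hK.1
    set c : ℝ := (if p = 2*k-1 then (1:ℝ) else 0) - (if p = 2*k then (1:ℝ) else 0) with hc
    have hconst : ∀ x ∈ dyadicSet (n+1,p), haar (n,k) x = c := by
      intro x hx
      have key : ∀ q : ℕ, (dyadicSet (n+1,q)).indicator (1:ℝ→ℝ) x = if p = q then 1 else 0 := by
        intro q
        by_cases hpq : p = q
        · rw [if_pos hpq, ← hpq, Set.indicator_of_mem hx, Pi.one_apply]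
        · rw [if_neg hpq, Set.indicator_of_notMem (dyadic_disjoint (n+1) p q hpq x hx)]
      rw [haar_eq n k hk1]
      dsimp only
      rw [key, key]
    have hpt : ∀ x, haar (n,k) x * haar (m,l) x = c * haar (m,l) x := by
      intro x
      by_cases hx : x ∈ dyadicSet (m,l)
      · rw [hconst x (hsub hx)]
      · rw [haar_support m l x hx, mul_zero, mul_zero]
    simp only [hpt]
    rw [intervalIntegral.integral_const_mul, integral_haar m l hL.1 hL.2, mul_zero]

lemma haar_orth' (K L : ℕ × ℕ) (hK : IsDyadic K) (hL : IsDyadic L) (hne : K ≠ L) :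
    ∫ x in (0:ℝ)..1, haar K x * haar L x = 0 := by
  obtain ⟨n,k⟩ := K; obtain ⟨m,l⟩ := L
  rcases le_total n m with h | h
  · exact haar_orth n k m l hK hL h hne
  · have h2 := haar_orth m l n k hL hK h (Ne.symm hne)
    rw [← h2]
    congr 1
    funext x
    rw [mul_comm]

lemma hprod_le (K L : ℕ × ℕ) (x : ℝ) : |haar K x * haar L x| ≤ 1 := by
  rw [abs_mul]
  have h1 := abs_haar_le K x
  have h2 := abs_haar_le L x
  nlinarith [abs_nonneg (haar K x), abs_nonneg (haar L x)]


/-- Duality estimate: for `f = Σ_{I∈A} a_I h_I` in the span of the Haar system with finite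
`SL^∞` norm and `g = Σ_{I∈A} b_I h_I` in the span of the Haar system,
`|∫₀¹ f g| ≤ ‖f‖_{SL^∞} ‖g‖_{H^1}`, where
`‖f‖_{SL^∞} = ‖(Σ a_I² h_I²)^{1/2}‖_{L^∞}` and `‖g‖_{H^1} = ∫₀¹ (Σ b_I² h_I(x)²)^{1/2} dx`. -/
theorem SLinfty_H1_duality (A : Finset (ℕ × ℕ)) (hdy : ∀ K ∈ A, IsDyadic K)
    (a b : ℕ × ℕ → ℝ)
    (hfin : eLpNorm (fun x => Real.sqrt (∑ K ∈ A, (a K) ^ 2 * (haar K x) ^ 2)) ⊤ volume ≠ ⊤) :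
    |∫ x in (0:ℝ)..1, (∑ K ∈ A, a K * haar K x) * (∑ K ∈ A, b K * haar K x)|
      ≤ (eLpNorm (fun x => Real.sqrt (∑ K ∈ A, (a K) ^ 2 * (haar K x) ^ 2)) ⊤ volume).toReal
        * ∫ x in (0:ℝ)..1, Real.sqrt (∑ K ∈ A, (b K) ^ 2 * (haar K x) ^ 2) := by

  classical
  set F0 : ℝ → ℝ := fun x => Real.sqrt (∑ K ∈ A, (a K) ^ 2 * (haar K x) ^ 2) with hF0
  set G0 : ℝ → ℝ := fun x => Real.sqrt (∑ K ∈ A, (b K) ^ 2 * (haar K x) ^ 2) with hG0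
  set M : ℝ := (eLpNorm F0 ⊤ volume).toReal with hM
  have mbleS : ∀ (c : ℕ × ℕ → ℝ), Measurable (fun x => ∑ K ∈ A, (c K)^2 * (haar K x)^2) :=
    fun c => Finset.measurable_sum A (fun K _ =>
      measurable_const.mul ((haar_measurable K).pow_const 2))
  have mG0 : Measurable G0 := (mbleS b).sqrt
  have hG0nonneg : ∀ x, 0 ≤ G0 x := fun x => Real.sqrt_nonneg _
  have hsq : ∀ (K : ℕ × ℕ) (x : ℝ), haar K x ^ 2 ≤ 1 := fun K x => by
    rw [← sq_abs]
    nlinarith [abs_haar_le K x, abs_nonneg (haar K x)]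
  have hG0bd : ∀ x, |G0 x| ≤ Real.sqrt (∑ K ∈ A, (b K)^2) := fun x => by
    rw [abs_of_nonneg (hG0nonneg x)]
    apply Real.sqrt_le_sqrt
    apply Finset.sum_le_sum
    intro K _
    nlinarith [hsq K x, sq_nonneg (b K)]
  have intG0 : IntervalIntegrable G0 volume 0 1 := intInt mG0 hG0bd
  set D : ℝ → ℝ := fun x => ∑ K ∈ A, (a K * b K) * (haar K x * haar K x) with hDdef
  have intterm : ∀ (K L : ℕ × ℕ),
      IntervalIntegrable (fun x => (a K * b L) * (haar K x * haar L x)) volume 0 1 := fun K L =>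
    intInt (measurable_const.mul ((haar_measurable K).mul (haar_measurable L)))
      (C := |a K * b L|) (fun x => by
        rw [abs_mul]
        nlinarith [hprod_le K L x, abs_nonneg (a K * b L), abs_nonneg (haar K x * haar L x)])
  have intinner : ∀ K : ℕ × ℕ,
      IntervalIntegrable (fun x => ∑ L ∈ A, (a K * b L) * (haar K x * haar L x)) volume 0 1 :=
    fun K => intInt
      (Finset.measurable_sum A fun L _ =>
        measurable_const.mul ((haar_measurable K).mul (haar_measurable L)))
      (C := ∑ L ∈ A, |a K * b L|) (fun x => by
        refine (Finset.abs_sum_le_sum_abs _ _).trans (Finset.sum_le_sum fun L _ => ?_)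
        rw [abs_mul]
        nlinarith [hprod_le K L x, abs_nonneg (a K * b L), abs_nonneg (haar K x * haar L x)])
  have mD : Measurable D := Finset.measurable_sum A (fun K _ =>
    measurable_const.mul ((haar_measurable K).mul (haar_measurable K)))
  have hDbd : ∀ x, |D x| ≤ ∑ K ∈ A, |a K * b K| := fun x => by
    refine (Finset.abs_sum_le_sum_abs _ _).trans (Finset.sum_le_sum fun K _ => ?_)
    rw [abs_mul]
    nlinarith [hprod_le K K x, abs_nonneg (a K * b K), abs_nonneg (haar K x * haar K x)]
  have intD : IntervalIntegrable D volume 0 1 := intInt mD hDbd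
  have intabsD : IntervalIntegrable (fun x => |D x|) volume 0 1 :=
    intInt mD.abs (C := ∑ K ∈ A, |a K * b K|) (fun x => by rw [abs_abs]; exact hDbd x)
  have intMG0 : IntervalIntegrable (fun x => M * G0 x) volume 0 1 := intG0.const_mul M
  -- Step 1 : diagonalization
  have L1 : (∫ x in (0:ℝ)..1, (∑ K ∈ A, a K * haar K x) * (∑ K ∈ A, b K * haar K x))
      = ∑ K ∈ A, (a K * b K) * ∫ x in (0:ℝ)..1, haar K x * haar K x := by
    have expand : ∀ x : ℝ, (∑ K ∈ A, a K * haar K x) * (∑ K ∈ A, b K * haar K x)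
        = ∑ K ∈ A, ∑ L ∈ A, (a K * b L) * (haar K x * haar L x) := by
      intro x
      rw [Finset.sum_mul_sum]
      exact Finset.sum_congr rfl fun K _ => Finset.sum_congr rfl fun L _ => by ring
    calc (∫ x in (0:ℝ)..1, (∑ K ∈ A, a K * haar K x) * (∑ K ∈ A, b K * haar K x))
        = ∫ x in (0:ℝ)..1, ∑ K ∈ A, ∑ L ∈ A, (a K * b L) * (haar K x * haar L x) := by
          simp only [expand]
      _ = ∑ K ∈ A, ∫ x in (0:ℝ)..1, ∑ L ∈ A, (a K * b L) * (haar K x * haar L x) :=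
          intervalIntegral.integral_finset_sum (fun K _ => intinner K)
      _ = ∑ K ∈ A, ∑ L ∈ A, ∫ x in (0:ℝ)..1, (a K * b L) * (haar K x * haar L x) :=
          Finset.sum_congr rfl fun K _ =>
            intervalIntegral.integral_finset_sum (fun L _ => intterm K L)
      _ = ∑ K ∈ A, (a K * b K) * ∫ x in (0:ℝ)..1, haar K x * haar K x := by
          refine Finset.sum_congr rfl fun K hK => ?_
          rw [Finset.sum_eq_single K]
          · rw [intervalIntegral.integral_const_mul]
          · intro L hL hLK
            rw [intervalIntegral.integral_const_mul,
              haar_orth' K L (hdy K hK) (hdy L hL) (Ne.symm hLK), mul_zero]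
          · intro hKA
            exact (hKA hK).elim
  have L2 : (∫ x in (0:ℝ)..1, D x)
      = ∑ K ∈ A, (a K * b K) * ∫ x in (0:ℝ)..1, haar K x * haar K x := by
    calc (∫ x in (0:ℝ)..1, D x)
        = ∫ x in (0:ℝ)..1, ∑ K ∈ A, (a K * b K) * (haar K x * haar K x) := rfl
      _ = ∑ K ∈ A, ∫ x in (0:ℝ)..1, (a K * b K) * (haar K x * haar K x) :=
          intervalIntegral.integral_finset_sum (fun K _ => intterm K K)
      _ = ∑ K ∈ A, (a K * b K) * ∫ x in (0:ℝ)..1, haar K x * haar K x :=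
          Finset.sum_congr rfl fun K _ => intervalIntegral.integral_const_mul _ _
  have step1 : (∫ x in (0:ℝ)..1, (∑ K ∈ A, a K * haar K x) * (∑ K ∈ A, b K * haar K x))
      = ∫ x in (0:ℝ)..1, D x := L1.trans L2.symm
  -- a.e. bound from the SL∞ norm
  have haeF : ∀ᵐ x ∂(volume : Measure ℝ), F0 x ≤ M := by
    filter_upwards [ae_le_eLpNormEssSup (f := F0) (μ := (volume : Measure ℝ))] with x hx
    have h1 : (‖F0 x‖₊ : ENNReal) ≤ eLpNorm F0 ⊤ volume := by
      rw [eLpNorm_exponent_top]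
      exact_mod_cast hx
    have h2 := ENNReal.toReal_mono hfin h1
    rw [ENNReal.coe_toReal, coe_nnnorm, Real.norm_eq_abs] at h2
    exact (le_abs_self _).trans h2
  -- pointwise Cauchy-Schwarz
  have hCS : ∀ x, |D x| ≤ F0 x * G0 x := fun x => by
    have h1 := Finset.sum_mul_sq_le_sq_mul_sq A (fun K => a K * haar K x)
      (fun K => b K * haar K x)
    have e1 : ∑ K ∈ A, (a K * haar K x)^2 = ∑ K ∈ A, (a K)^2 * (haar K x)^2 :=
      Finset.sum_congr rfl fun K _ => by ring
    have e2 : ∑ K ∈ A, (b K * haar K x)^2 = ∑ K ∈ A, (b K)^2 * (haar K x)^2 :=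
      Finset.sum_congr rfl fun K _ => by ring
    have e3 : ∑ K ∈ A, (a K * haar K x) * (b K * haar K x) = D x :=
      Finset.sum_congr rfl fun K _ => by ring
    rw [e1, e2, e3] at h1
    have h4 : |D x| ≤ Real.sqrt ((∑ K ∈ A, (a K)^2 * (haar K x)^2)
        * (∑ K ∈ A, (b K)^2 * (haar K x)^2)) := by
      rw [← Real.sqrt_sq_eq_abs]
      exact Real.sqrt_le_sqrt h1
    rwa [Real.sqrt_mul (Finset.sum_nonneg fun K _ => by positivity)] at h4
  have hae : ∀ᵐ x ∂(volume : Measure ℝ), |D x| ≤ M * G0 x := by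
    filter_upwards [haeF] with x hx
    exact (hCS x).trans (mul_le_mul_of_nonneg_right hx (hG0nonneg x))
  rw [step1]
  calc |∫ x in (0:ℝ)..1, D x|
      ≤ ∫ x in (0:ℝ)..1, |D x| := intervalIntegral.abs_integral_le_integral_abs zero_le_one
    _ ≤ ∫ x in (0:ℝ)..1, M * G0 x :=
        intervalIntegral.integral_mono_ae zero_le_one intabsD intMG0 hae
    _ = M * ∫ x in (0:ℝ)..1, G0 x := intervalIntegral.integral_const_mul _ _
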